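/- arXiv:1906.03052 — 4 statements merged into one kernel-verified Lean document; each statement's English description precedes it below -/
import Mathlib

section
/- For a finite connected simple graph G on vertex set V and sets ∅ ≠ I ⊆ O ⊆ V, the transition probability is a probability: 0 ≤ ρ_{I→O} ≤ 1. -/
open Finset

variable {V : Type*} [Fintype V] [DecidableEq V]

/-- The adjacency matrix of the graph, real-valued. -/
noncomputable def adjMat (G : SimpleGraph V) [DecidableRel G.Adj] (i j : V) : ℝ :=
  if G.Adj i j then 1 else 0

/-- `vol(I,J) = ∑_{i∈I} ∑_{j∈J} A_{ij}`. -/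
noncomputable def vol (G : SimpleGraph V) [DecidableRel G.Adj] (I J : Finset V) : ℝ :=
  ∑ i ∈ I, ∑ j ∈ J, adjMat G i j

/-- Weight of an infection ordering starting from infected set `I`:
`∏_k vol(I_{k-1},{σ_k}) / vol(I_{k-1}, V∖I_{k-1})`. -/
noncomputable def pathWeight (G : SimpleGraph V) [DecidableRel G.Adj] :
    Finset V → List V → ℝ
  | _, [] => 1
  | I, j :: rest => (vol G I {j} / vol G I Iᶜ) * pathWeight G (insert j I) rest

/-- A listing is a valid infection ordering from `I` when each new node is adjacent to some
already-infected node. -/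
def validOrdering (G : SimpleGraph V) [DecidableRel G.Adj] :
    Finset V → List V → Bool
  | _, [] => true
  | I, j :: rest => (decide (∃ i ∈ I, G.Adj i j)) && validOrdering G (insert j I) rest

/-- The set of infection orderings from `I` to `O`: listings of the distinct elements of `O ∖ I`
in which each node is adjacent to a previously infected node. -/
noncomputable def orderings (G : SimpleGraph V) [DecidableRel G.Adj] (I O : Finset V) :
    Finset (List V) :=
  ((O \ I).toList.permutations.toFinset).filter fun l => validOrdering G I l

/-- The transition probability `ρ_{I→O}`: the sum of the weights of all infection orderings
from `I` to `O`. -/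
noncomputable def transProb (G : SimpleGraph V) [DecidableRel G.Adj] (I O : Finset V) : ℝ :=
  ∑ l ∈ orderings G I O, pathWeight G I l

set_option linter.unusedSectionVars false

lemma adjMat_nonneg (G : SimpleGraph V) [DecidableRel G.Adj] (i j : V) : 0 ≤ adjMat G i j := by
  unfold adjMat; split <;> norm_num

lemma vol_nonneg (G : SimpleGraph V) [DecidableRel G.Adj] (I J : Finset V) : 0 ≤ vol G I J :=
  Finset.sum_nonneg fun i _ => Finset.sum_nonneg fun j _ => adjMat_nonneg G i j

lemma sum_vol_single (G : SimpleGraph V) [DecidableRel G.Adj] (I J : Finset V) :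
    ∑ j ∈ J, vol G I {j} = vol G I J := by
  unfold vol
  rw [Finset.sum_comm]
  simp

lemma vol_pos (G : SimpleGraph V) [DecidableRel G.Adj] (hG : G.Connected) (I : Finset V)
    (hI : I.Nonempty) (hIc : Iᶜ.Nonempty) : 0 < vol G I Iᶜ := by
  obtain ⟨u, hu⟩ := hI
  obtain ⟨v, hv⟩ := hIc
  obtain ⟨p⟩ := hG.preconnected u v
  obtain ⟨d, _, hd1, hd2⟩ := p.exists_boundary_dart (↑I : Set V)
    (by simpa using hu) (by simpa using (Finset.mem_compl.mp hv))
  unfold vol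
  apply Finset.sum_pos'
  · intro i _; exact Finset.sum_nonneg fun j _ => adjMat_nonneg G i j
  · refine ⟨d.toProd.1, by simpa using hd1, Finset.sum_pos' (fun j _ => adjMat_nonneg _ _ _) ?_⟩
    refine ⟨d.toProd.2, Finset.mem_compl.mpr (by simpa using hd2), ?_⟩
    unfold adjMat
    rw [if_pos d.adj]
    norm_num

lemma pathWeight_nonneg (G : SimpleGraph V) [DecidableRel G.Adj] :
    ∀ (l : List V) (I : Finset V), 0 ≤ pathWeight G I l
  | [], I => by simp [pathWeight]
  | j :: rest, I => by
    simp only [pathWeight]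
    exact mul_nonneg (div_nonneg (vol_nonneg _ _ _) (vol_nonneg _ _ _))
      (pathWeight_nonneg G rest _)

lemma mem_perm_toFinset (s : Finset V) (l : List V) :
    l ∈ s.toList.permutations.toFinset ↔ (↑l : Multiset V) = s.val := by
  rw [List.mem_toFinset, List.mem_permutations, ← Multiset.coe_eq_coe, Finset.coe_toList]

lemma key (G : SimpleGraph V) [DecidableRel G.Adj] (hG : G.Connected) :
    ∀ (n : ℕ) (I s : Finset V), s.card = n → I.Nonempty → (∀ j ∈ s, j ∉ I) →
    ∑ l ∈ (s.toList.permutations.toFinset.filter fun l => validOrdering G I l),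
      pathWeight G I l ≤ 1 := by
  intro n
  induction n with
  | zero =>
    intro I s hcard _ _
    rw [Finset.card_eq_zero] at hcard
    subst hcard
    rw [show (∅ : Finset V).toList = [] from by simp]
    rw [List.permutations_nil]
    rw [show ([[]] : List (List V)).toFinset = {[]} from rfl]
    rw [Finset.filter_singleton]
    simp [validOrdering, pathWeight]
  | succ n ih =>
    intro I s hcard hI hdisj
    have hsne : s.Nonempty := Finset.card_pos.mp (by omega)
    -- decompose the index set
    have hdecomp : (s.toList.permutations.toFinset.filter fun l => validOrdering G I l)
        = s.biUnion (fun j => ((s.erase j).toList.permutations.toFinset.filter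
            fun l => validOrdering G I (j :: l)).image (j :: ·)) := by
      ext l
      simp only [Finset.mem_filter, Finset.mem_biUnion, Finset.mem_image, mem_perm_toFinset]
      constructor
      · rintro ⟨hperm, hvalid⟩
        match l with
        | [] =>
          exfalso
          have := congrArg Multiset.card hperm
          simp at this
          omega
        | j :: rest =>
          have hj : j ∈ s := by
            rw [← Finset.mem_val, ← hperm]; simp
          refine ⟨j, hj, rest, ⟨⟨?_, hvalid⟩, rfl⟩⟩
          have : (↑(j :: rest) : Multiset V) = j ::ₘ ↑rest := rfl
          rw [this] at hperm
          have := congrArg (Multiset.erase · j) hperm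
          simpa [Finset.erase_val] using this
      · rintro ⟨j, hj, rest, ⟨⟨hperm, hvalid⟩, rfl⟩⟩
        refine ⟨?_, hvalid⟩
        have : (↑(j :: rest) : Multiset V) = j ::ₘ ↑rest := rfl
        rw [this, hperm, Finset.erase_val, Multiset.cons_erase (Finset.mem_val.mpr hj)]
    rw [hdecomp, Finset.sum_biUnion, ]
    · calc ∑ j ∈ s, ∑ l ∈ ((s.erase j).toList.permutations.toFinset.filter
            fun l => validOrdering G I (j :: l)).image (j :: ·), pathWeight G I l
          ≤ ∑ j ∈ s, vol G I {j} / vol G I Iᶜ := by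
            apply Finset.sum_le_sum
            intro j hj
            rw [Finset.sum_image (by intro a _ b _ h; exact List.tail_eq_of_cons_eq h)]
            by_cases hadj : ∃ i ∈ I, G.Adj i j
            · have hfilter : ∀ l, validOrdering G I (j :: l) = validOrdering G (insert j I) l := by
                intro l
                simp [validOrdering, hadj]
              calc ∑ l ∈ ((s.erase j).toList.permutations.toFinset.filter
                    fun l => validOrdering G I (j :: l)), pathWeight G I (j :: l)
                  = (vol G I {j} / vol G I Iᶜ) *
                    ∑ l ∈ ((s.erase j).toList.permutations.toFinset.filter
                      fun l => validOrdering G (insert j I) l), pathWeight G (insert j I) l := by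
                    rw [Finset.mul_sum]
                    apply Finset.sum_congr (by ext l; simp [hfilter])
                    intro l _
                    simp [pathWeight]
                _ ≤ (vol G I {j} / vol G I Iᶜ) * 1 := by
                    apply mul_le_mul_of_nonneg_left
                    · apply ih (insert j I) (s.erase j)
                      · rw [Finset.card_erase_of_mem hj]; omega
                      · exact ⟨j, Finset.mem_insert_self j I⟩
                      · intro k hk
                        simp only [Finset.mem_insert]
                        push_neg
                        exact ⟨Finset.ne_of_mem_erase hk, hdisj k (Finset.mem_of_mem_erase hk)⟩
                    · exact div_nonneg (vol_nonneg _ _ _) (vol_nonneg _ _ _)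
                _ = vol G I {j} / vol G I Iᶜ := mul_one _
            · have : ((s.erase j).toList.permutations.toFinset.filter
                  fun l => validOrdering G I (j :: l)) = ∅ := by
                apply Finset.filter_false_of_mem
                intro l _
                simp [validOrdering, hadj]
              rw [this]
              simp
              exact div_nonneg (vol_nonneg _ _ _) (vol_nonneg _ _ _)
        _ ≤ ∑ j ∈ Iᶜ, vol G I {j} / vol G I Iᶜ := by
            apply Finset.sum_le_sum_of_subset_of_nonneg
            · intro j hj; exact Finset.mem_compl.mpr (hdisj j hj)
            · intro j _ _; exact div_nonneg (vol_nonneg _ _ _) (vol_nonneg _ _ _)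
        _ = 1 := by
            rw [← Finset.sum_div, sum_vol_single]
            apply div_self
            have hIc : (Iᶜ : Finset V).Nonempty := by
              obtain ⟨j, hj⟩ := hsne
              exact ⟨j, Finset.mem_compl.mpr (hdisj j hj)⟩
            exact ne_of_gt (vol_pos G hG I hI hIc)
    · -- pairwise disjoint
      intro a _ b _ hab
      apply Finset.disjoint_left.mpr
      rintro l hla hlb
      simp only [Finset.mem_image] at hla hlb
      obtain ⟨la, _, rfl⟩ := hla
      obtain ⟨lb, _, heq⟩ := hlb
      exact hab (List.head_eq_of_cons_eq heq.symm)

/-- The transition probability is a probability: `0 ≤ ρ_{I→O} ≤ 1`. -/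
theorem transProb_nonneg_le_one (G : SimpleGraph V) [DecidableRel G.Adj] (hG : G.Connected)
    (I O : Finset V) (hI : I.Nonempty) (hIO : I ⊆ O) :
    0 ≤ transProb G I O ∧ transProb G I O ≤ 1 := by
  constructor
  · exact Finset.sum_nonneg fun l _ => pathWeight_nonneg G l I
  · exact key G hG (O \ I).card I (O \ I) rfl hI fun j hj => (Finset.mem_sdiff.mp hj).2
end

section
/- Let A be the adjacency matrix of a finite simple graph on vertex set V and fix O ⊆ V. For j ≠ j′ in O, the (j,j′) entry of QᵀQ satisfies ∑_{I ⊊ O} 1{j∉I} 1{j′∉I} vol(I,{j}) vol(I,{j′}) = 2^{|O|−4} · [ deg_{O∖{j′}}(j) · deg_{O∖{j}}(j′) + vol^{(2)}_{O∖{j,j′}}(j,j′) ], where 2^{|O|−4} denotes the real power (equal to 1/4 when |O|=2, etc.). -/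
open Finset

variable {V : Type*} [Fintype V] [DecidableEq V]

/-- `deg_S(i) = ∑_{s∈S} A_{is}`. -/
noncomputable def degS (G : SimpleGraph V) [DecidableRel G.Adj] (S : Finset V) (i : V) : ℝ :=
  ∑ s ∈ S, adjMat G i s

/-- `vol²_S(i,j) = ∑_{r∈S} A_{ir} A_{rj}`, the number of paths of length 2 from `i` to `j`
through `S`. -/
noncomputable def vol2 (G : SimpleGraph V) [DecidableRel G.Adj] (S : Finset V) (i j : V) : ℝ :=
  ∑ r ∈ S, adjMat G i r * adjMat G r j

omit [Fintype V] in
lemma adjMat_comm (G : SimpleGraph V) [DecidableRel G.Adj] (i j : V) :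
    adjMat G i j = adjMat G j i := by simp [adjMat, G.adj_comm]

omit [Fintype V] in
lemma adjMat_self (G : SimpleGraph V) [DecidableRel G.Adj] (i : V) :
    adjMat G i i = 0 := by simp [adjMat]

omit [Fintype V] in
lemma count_lemma (S : Finset V) (i i' : V) (hi : i ∈ S) (hi' : i' ∈ S) :
    ∑ I ∈ S.powerset, ((if i ∈ I then (1:ℝ) else 0) * (if i' ∈ I then (1:ℝ) else 0))
      = 2 ^ (S.card - ({i, i'} : Finset V).card) := by
  classical
  have key := Finset.prod_add (fun _ : V => (1:ℝ))
      (fun x => if x = i ∨ x = i' then 0 else 1) S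
  have hfilter : S.filter (fun x => x = i ∨ x = i') = {i, i'} := by
    ext x
    simp only [mem_filter, mem_insert, mem_singleton]
    constructor
    · rintro ⟨_, h⟩; exact h
    · rintro (rfl | rfl) <;> simp [hi, hi']
  have hL : ∏ x ∈ S, ((fun _ : V => (1:ℝ)) x + (fun x => if x = i ∨ x = i' then (0:ℝ) else 1) x)
      = 2 ^ (S.card - ({i, i'} : Finset V).card) := by
    have : ∀ x ∈ S, ((1:ℝ) + if x = i ∨ x = i' then (0:ℝ) else 1)
        = if x = i ∨ x = i' then 1 else 2 := by
      intro x _; by_cases h : x = i ∨ x = i' <;> simp [h]; norm_num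
    rw [Finset.prod_congr rfl this, Finset.prod_ite]
    simp only [Finset.prod_const_one, one_mul, Finset.prod_const]
    congr 1
    have := Finset.card_filter_add_card_filter_not
      (s := S) (p := fun x => x = i ∨ x = i')
    rw [hfilter] at this
    omega
  rw [← hL, key]
  apply Finset.sum_congr rfl
  intro t ht
  simp only [Finset.mem_powerset] at ht
  simp only [Finset.prod_const_one, one_mul]
  by_cases h1 : i ∈ t
  · by_cases h2 : i' ∈ t
    · rw [if_pos h1, if_pos h2, one_mul]
      refine (Finset.prod_eq_one ?_).symm
      intro x hx
      rw [Finset.mem_sdiff] at hx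
      have : ¬(x = i ∨ x = i') := by rintro (rfl | rfl) <;> [exact hx.2 h1; exact hx.2 h2]
      simp [this]
    · rw [if_neg h2, mul_zero]
      refine (Finset.prod_eq_zero (Finset.mem_sdiff.mpr ⟨hi', h2⟩) ?_).symm
      simp
  · rw [if_neg h1, zero_mul]
    refine (Finset.prod_eq_zero (Finset.mem_sdiff.mpr ⟨hi, h1⟩) ?_).symm
    simp


/-- Off-diagonal entries of `QᵀQ`: for `j ≠ j'` in `O`,
`∑_{I ⊊ O} 1{j∉I} 1{j′∉I} vol(I,{j}) vol(I,{j′})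
  = 2^{|O|−4} [deg_{O∖{j′}}(j) deg_{O∖{j}}(j′) + vol²_{O∖{j,j′}}(j,j′)]`. -/
theorem QtQ_offdiag (G : SimpleGraph V) [DecidableRel G.Adj] (O : Finset V)
    (j j' : V) (hj : j ∈ O) (hj' : j' ∈ O) (hne : j ≠ j') :
    ∑ I ∈ O.powerset.filter (fun I => I ⊂ O),
        (if j ∉ I then (1 : ℝ) else 0) * (if j' ∉ I then (1 : ℝ) else 0) *
          (vol G I {j} * vol G I {j'}) =
      (2 : ℝ) ^ ((O.card : ℤ) - 4) *
        (degS G (O.erase j') j * degS G (O.erase j) j'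
          + vol2 G ((O.erase j).erase j') j j') := by
  classical
  set a : V → ℝ := fun i => adjMat G i j with ha
  set b : V → ℝ := fun i => adjMat G i j' with hb
  set O' : Finset V := (O.erase j).erase j' with hO'
  have hjO' : j ∉ O' := by simp [hO']
  have hj'O' : j' ∉ O' := by simp [hO']
  have hj'ej : j' ∈ O.erase j := mem_erase.mpr ⟨hne.symm, hj'⟩
  have hcard : O'.card = O.card - 2 := by
    rw [hO', card_erase_of_mem hj'ej, card_erase_of_mem hj]
    omega
  have hn2 : 2 ≤ O.card := one_lt_card.mpr ⟨j, hj, j', hj', hne⟩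
  -- Step 1: reduce the sum to the powerset of O'
  have hsub : O'.powerset ⊆ O.powerset.filter (fun I => I ⊂ O) := by
    intro I hI
    rw [mem_powerset] at hI
    have hIO : I ⊆ O := hI.trans ((erase_subset _ _).trans (erase_subset _ _))
    rw [mem_filter, mem_powerset]
    exact ⟨hIO, ssubset_iff_of_subset hIO |>.mpr ⟨j, hj, fun hjI => hjO' (hI hjI)⟩⟩
  have step1 : ∑ I ∈ O.powerset.filter (fun I => I ⊂ O),
        (if j ∉ I then (1 : ℝ) else 0) * (if j' ∉ I then (1 : ℝ) else 0) *
          (vol G I {j} * vol G I {j'})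
      = ∑ I ∈ O'.powerset, vol G I {j} * vol G I {j'} := by
    rw [← Finset.sum_subset hsub]
    · apply Finset.sum_congr rfl
      intro I hI
      rw [mem_powerset] at hI
      have h1 : j ∉ I := fun h => hjO' (hI h)
      have h2 : j' ∉ I := fun h => hj'O' (hI h)
      rw [if_pos h1, if_pos h2]; ring
    · intro I hI hI'
      rw [mem_powerset] at hI'
      rw [mem_filter, mem_powerset] at hI
      have : j ∈ I ∨ j' ∈ I := by
        by_contra h
        push_neg at h
        exact hI' fun x hx => mem_erase.mpr ⟨fun he => h.2 (he ▸ hx),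
          mem_erase.mpr ⟨fun he => h.1 (he ▸ hx), hI.1 hx⟩⟩
      rcases this with h | h
      · rw [if_neg (not_not.mpr h)]; ring
      · rw [if_neg (not_not.mpr h)]; ring
  rw [step1]
  -- Step 2: per-I, expand the product of vols into indicator sums over O'
  have step2 : ∀ I ∈ O'.powerset,
      vol G I {j} * vol G I {j'}
        = ∑ i ∈ O', ∑ i' ∈ O',
            ((if i ∈ I then (1:ℝ) else 0) * (if i' ∈ I then (1:ℝ) else 0)) * (a i * b i') := by
    intro I hI
    rw [mem_powerset] at hI
    have hvj : vol G I {j} = ∑ i ∈ O', (if i ∈ I then (1:ℝ) else 0) * a i := by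
      rw [vol]
      simp only [sum_singleton, ite_mul, one_mul, zero_mul, Finset.sum_ite_mem,
        inter_eq_right.mpr hI]
      rfl
    have hvj' : vol G I {j'} = ∑ i' ∈ O', (if i' ∈ I then (1:ℝ) else 0) * b i' := by
      rw [vol]
      simp only [sum_singleton, ite_mul, one_mul, zero_mul, Finset.sum_ite_mem,
        inter_eq_right.mpr hI]
      rfl
    rw [hvj, hvj', Finset.sum_mul_sum]
    apply Finset.sum_congr rfl; intro i _
    apply Finset.sum_congr rfl; intro i' _
    ring
  rw [Finset.sum_congr rfl step2]
  -- Step 3: swap summation and apply the counting lemma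
  rw [Finset.sum_comm]
  have step3 : ∀ i ∈ O', ∑ I ∈ O'.powerset, ∑ i' ∈ O',
        ((if i ∈ I then (1:ℝ) else 0) * (if i' ∈ I then (1:ℝ) else 0)) * (a i * b i')
      = ∑ i' ∈ O', (a i * b i') * 2 ^ (O'.card - ({i, i'} : Finset V).card) := by
    intro i hi
    rw [Finset.sum_comm]
    apply Finset.sum_congr rfl; intro i' hi'
    rw [← Finset.sum_mul, count_lemma O' i i' hi hi', mul_comm]
  rw [Finset.sum_congr rfl step3]
  -- Step 4: rewrite the RHS
  have hdeg1 : degS G (O.erase j') j = ∑ i ∈ O', a i := by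
    have : O.erase j' = insert j O' := by
      rw [hO', Finset.erase_right_comm (a := j) (b := j')]
      rw [Finset.insert_erase (mem_erase.mpr ⟨hne, hj⟩)]
    rw [degS, this, Finset.sum_insert hjO', adjMat_self, zero_add]
    exact Finset.sum_congr rfl fun i _ => adjMat_comm G j i
  have hdeg2 : degS G (O.erase j) j' = ∑ i ∈ O', b i := by
    have : O.erase j = insert j' O' := by
      rw [hO', Finset.insert_erase hj'ej]
    rw [degS, this, Finset.sum_insert hj'O', adjMat_self, zero_add]
    exact Finset.sum_congr rfl fun i _ => adjMat_comm G j' i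
  have hvol2 : vol2 G O' j j' = ∑ i ∈ O', a i * b i := by
    rw [vol2]
    exact Finset.sum_congr rfl fun i _ => by rw [adjMat_comm G j i]
  rw [hdeg1, hdeg2, hvol2, Finset.sum_mul_sum]
  set z : ℤ := (O.card : ℤ) - 4 with hz
  rw [mul_add, Finset.mul_sum]
  have hdiag : (2:ℝ) ^ z * ∑ i ∈ O', a i * b i
      = ∑ i ∈ O', ∑ i' ∈ O', (if i' = i then (2:ℝ) ^ z * (a i * b i') else 0) := by
    rw [Finset.mul_sum]
    apply Finset.sum_congr rfl; intro i hi
    rw [Finset.sum_ite_eq' O' i (fun i' => (2:ℝ) ^ z * (a i * b i')), if_pos hi]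
  rw [hdiag, ← Finset.sum_add_distrib]
  apply Finset.sum_congr rfl; intro i hi
  rw [Finset.mul_sum, ← Finset.sum_add_distrib]
  apply Finset.sum_congr rfl; intro i' hi'
  by_cases h : i' = i
  · subst h
    rw [if_pos rfl]
    have hc1 : ({i', i'} : Finset V).card = 1 := by simp
    have hO1 : 1 ≤ O'.card := card_pos.mpr ⟨i', hi'⟩
    rw [hc1]
    have hcast : ((O'.card - 1 : ℕ) : ℤ) = z + 1 := by
      rw [hz]; omega
    have : (2:ℝ) ^ (O'.card - 1) = (2:ℝ) ^ ((O'.card - 1 : ℕ) : ℤ) := by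
      rw [zpow_natCast]
    rw [this, hcast, zpow_add_one₀ (two_ne_zero)]
    ring
  · rw [if_neg h]
    have hc2 : ({i, i'} : Finset V).card = 2 := by
      rw [Finset.card_insert_of_notMem
        (fun hm => h (Finset.mem_singleton.mp hm).symm), Finset.card_singleton]
    have hO2 : 2 ≤ O'.card := one_lt_card.mpr ⟨i, hi, i', hi', fun e => h e.symm⟩
    rw [hc2]
    have hcast : ((O'.card - 2 : ℕ) : ℤ) = z := by
      rw [hz]; omega
    have : (2:ℝ) ^ (O'.card - 2) = (2:ℝ) ^ ((O'.card - 2 : ℕ) : ℤ) := by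
      rw [zpow_natCast]
    rw [this, hcast]
    ring
end

section
/- Let A be the adjacency matrix of a finite simple graph on vertex set V and fix O ⊆ V. For every j ∈ O, the (j,j) diagonal entry of QᵀQ satisfies ∑_{I ⊊ O} 1{j∉I} vol(I,{j})² = 2^{|O|−3} · deg_O(j) · ( deg_O(j) + 1 ), where 2^{|O|−3} denotes the real power. -/
open Finset

variable {V : Type*} [Fintype V] [DecidableEq V]

lemma sum_powerset_linear (S : Finset V) (a : V → ℝ) :
    ∑ I ∈ S.powerset, ∑ i ∈ I, a i = (2:ℝ) ^ ((S.card:ℤ) - 1) * ∑ i ∈ S, a i := by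
  induction S using Finset.induction with
  | empty => simp
  | insert _ _ hx _ =>
    rename_i x S ih
    rw [Finset.sum_powerset_insert hx]
    have h1 : ∀ I ∈ S.powerset, ∑ i ∈ insert x I, a i = a x + ∑ i ∈ I, a i := by
      intro I hI
      rw [Finset.mem_powerset] at hI
      exact Finset.sum_insert (fun h => hx (hI h))
    rw [Finset.sum_congr rfl h1, Finset.sum_add_distrib, Finset.sum_const, ih,
      Finset.card_powerset, Finset.card_insert_of_notMem hx, Finset.sum_insert hx]
    have e1 : ((S.card+1:ℕ):ℤ)-1 = 1 + ((S.card:ℤ)-1) := by push_cast; ring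
    have e2 : (((2:ℕ)^S.card : ℕ) : ℝ) = 2 * (2:ℝ)^((S.card:ℤ)-1) := by
      rw [← zpow_one_add₀ (by norm_num : (2:ℝ) ≠ 0)]
      have : (1:ℤ) + ((S.card:ℤ)-1) = (S.card:ℤ) := by ring
      rw [this, zpow_natCast]
      push_cast; ring
    rw [e1, zpow_one_add₀ (by norm_num : (2:ℝ) ≠ 0), nsmul_eq_mul, e2]
    ring

lemma sum_powerset_sq (S : Finset V) (a : V → ℝ) (ha : ∀ i, a i * a i = a i) :
    ∑ I ∈ S.powerset, (∑ i ∈ I, a i)^2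
      = (2:ℝ) ^ ((S.card:ℤ) - 2) * ((∑ i ∈ S, a i) * ((∑ i ∈ S, a i) + 1)) := by
  induction S using Finset.induction with
  | empty => simp
  | insert _ _ hx _ =>
    rename_i x S ih
    rw [Finset.sum_powerset_insert hx]
    have h1 : ∀ I ∈ S.powerset, (∑ i ∈ insert x I, a i)^2
        = (∑ i ∈ I, a i)^2 + 2 * a x * (∑ i ∈ I, a i) + a x := by
      intro I hI
      rw [Finset.mem_powerset] at hI
      rw [Finset.sum_insert (fun h => hx (hI h))]
      have := ha x
      ring_nf
      nlinarith [ha x]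
    rw [Finset.sum_congr rfl h1]
    simp only [Finset.sum_add_distrib, Finset.sum_const, ← Finset.mul_sum]
    rw [ih, sum_powerset_linear, Finset.card_powerset,
      Finset.card_insert_of_notMem hx, Finset.sum_insert hx]
    have e1 : ((S.card+1:ℕ):ℤ)-2 = 1 + ((S.card:ℤ)-2) := by push_cast; ring
    have e2 : (((2:ℕ)^S.card : ℕ) : ℝ) = 2 * (2:ℝ)^((S.card:ℤ)-1) := by
      rw [← zpow_one_add₀ (by norm_num : (2:ℝ) ≠ 0)]
      have : (1:ℤ) + ((S.card:ℤ)-1) = (S.card:ℤ) := by ring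
      rw [this, zpow_natCast]
      push_cast; ring
    have e3 : (2:ℝ)^((S.card:ℤ)-1) = 2 * (2:ℝ)^((S.card:ℤ)-2) := by
      rw [← zpow_one_add₀ (by norm_num : (2:ℝ) ≠ 0)]
      congr 1; ring
    rw [e1, zpow_one_add₀ (by norm_num : (2:ℝ) ≠ 0), nsmul_eq_mul, e2, e3]
    have := ha x
    nlinarith [ha x]

/-- Diagonal entries of `QᵀQ`:
`∑_{I ⊊ O} 1{j∉I} vol(I,{j})² = 2^{|O|−3} deg_O(j) (deg_O(j) + 1)`. -/
theorem QtQ_diag (G : SimpleGraph V) [DecidableRel G.Adj] (O : Finset V)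
    (j : V) (hj : j ∈ O) :
    ∑ I ∈ O.powerset.filter (fun I => I ⊂ O),
        (if j ∉ I then (1 : ℝ) else 0) * vol G I {j} ^ 2 =
      (2 : ℝ) ^ ((O.card : ℤ) - 3) * (degS G O j * (degS G O j + 1)) := by
  classical
  set a : V → ℝ := fun i => adjMat G i j with haa
  have ha : ∀ i, a i * a i = a i := by
    intro i; simp only [haa, adjMat]; split_ifs <;> norm_num
  have hvol : ∀ I : Finset V, vol G I {j} = ∑ i ∈ I, a i := by
    intro I; simp [vol, haa]
  have step1 : ∑ I ∈ O.powerset.filter (fun I => I ⊂ O),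
        (if j ∉ I then (1 : ℝ) else 0) * vol G I {j} ^ 2
      = ∑ I ∈ (O.erase j).powerset, (∑ i ∈ I, a i)^2 := by
    have h1 : ∀ I ∈ O.powerset.filter (fun I => I ⊂ O),
        (if j ∉ I then (1 : ℝ) else 0) * vol G I {j} ^ 2
        = (if j ∉ I then (∑ i ∈ I, a i)^2 else 0) := by
      intro I _; rw [hvol]; split_ifs <;> ring
    rw [Finset.sum_congr rfl h1, ← Finset.sum_filter]
    congr 1
    ext I
    simp only [Finset.mem_filter, Finset.mem_powerset, Finset.subset_erase]
    constructor
    · rintro ⟨⟨hIO, _⟩, hjI⟩; exact ⟨hIO, hjI⟩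
    · rintro ⟨hIO, hjI⟩
      refine ⟨⟨hIO, Finset.ssubset_iff_subset_ne.mpr ⟨hIO, ?_⟩⟩, hjI⟩
      rintro rfl; exact hjI hj
  have hdeg : ∑ i ∈ O.erase j, a i = degS G O j := by
    rw [Finset.sum_erase O (by simp [haa, adjMat])]
    unfold degS
    exact Finset.sum_congr rfl fun i _ => by
      simp only [haa, adjMat, G.adj_comm]
  have hcard : (((O.erase j).card : ℤ) - 2) = (O.card : ℤ) - 3 := by
    rw [Finset.card_erase_of_mem hj]
    have h1 : 1 ≤ O.card := Finset.card_pos.mpr ⟨j, hj⟩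
    push_cast [Nat.cast_sub h1]
    ring
  rw [step1, sum_powerset_sq _ _ ha, hdeg, hcard]
end

section
/- Let A be the adjacency matrix of a finite simple graph on vertex set V and fix O ⊆ V. For every j ∈ O, the j-th entry of Qᵀr satisfies ∑_{I ⊊ O} 1{j∉I} vol(I,{j}) vol(I, V∖I) = 2^{|O|−4} · [ vol(O∖{j}, O∖{j}) · deg_O(j) + 2 vol( V∖(O∖{j}), O∖{j} ) · deg_O(j) + 2 vol( adj_O(j), V∖(O∖{j}) ) ], where adj_O(j) = { i ∈ O : A_{ij} = 1 } and 2^{|O|−4} denotes the real power. -/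
open Finset

variable {V : Type*} [Fintype V] [DecidableEq V]

set_option linter.unusedSectionVars false
set_option maxHeartbeats 1000000

lemma count_subsets (S T : Finset V) (h : T ⊆ S) :
    (S.powerset.filter (fun I => T ⊆ I)).card = 2 ^ (S.card - T.card) := by
  rw [← card_sdiff_of_subset h, ← card_powerset (S \ T)]
  apply Finset.card_bij' (fun I _ => I \ T) (fun J _ => J ∪ T)
  · intro I hI
    simp only [mem_filter, mem_powerset] at hI
    exact mem_powerset.2 (sdiff_subset_sdiff hI.1 (Finset.Subset.refl _))
  · intro J hJ
    simp only [mem_powerset] at hJ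
    simp only [mem_filter, mem_powerset]
    exact ⟨union_subset (hJ.trans (sdiff_subset)) h, subset_union_right⟩
  · intro I hI
    simp only [mem_filter, mem_powerset] at hI
    exact sdiff_union_of_subset hI.2
  · intro J hJ
    simp only [mem_powerset] at hJ
    have : Disjoint J T := disjoint_of_subset_left hJ sdiff_disjoint
    rw [union_sdiff_right, sdiff_eq_self_of_disjoint this]

lemma sum_ind_subset (S T : Finset V) (h : T ⊆ S) :
    ∑ I ∈ S.powerset, (if T ⊆ I then (1:ℝ) else 0) = (2:ℝ) ^ ((S.card : ℤ) - T.card) := by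
  rw [Finset.sum_boole, count_subsets S T h]
  have hle : T.card ≤ S.card := card_le_card h
  rw [← Nat.cast_ofNat, ← Nat.cast_pow,
    show ((S.card : ℤ) - T.card) = ((S.card - T.card : ℕ) : ℤ) by omega, zpow_natCast]
  norm_num

/-- indicator -/
noncomputable def ind (x : V) (I : Finset V) : ℝ := if x ∈ I then 1 else 0

lemma sum_eq_ind_sum (S I : Finset V) (h : I ⊆ S) (f : V → ℝ) :
    ∑ i ∈ I, f i = ∑ i ∈ S, ind i I * f i := by
  have : ∀ i, ind i I * f i = if i ∈ I then f i else 0 := by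
    intro i; unfold ind; split <;> simp
  rw [Finset.sum_congr rfl (fun i _ => this i), Finset.sum_ite_mem,
    Finset.inter_eq_right.2 h]

lemma ind_two (S : Finset V) (i p : V) (hi : i ∈ S) (hp : p ∈ S) :
    ∑ I ∈ S.powerset, ind i I * ind p I
      = if i = p then (2:ℝ) ^ ((S.card : ℤ) - 1) else (2:ℝ) ^ ((S.card : ℤ) - 2) := by
  have key : ∀ I : Finset V, ind i I * ind p I = if ({i, p} : Finset V) ⊆ I then (1:ℝ) else 0 := by
    intro I
    unfold ind
    by_cases h1 : i ∈ I <;> by_cases h2 : p ∈ I <;>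
      simp [h1, h2, Finset.insert_subset_iff]
  rw [Finset.sum_congr rfl (fun I _ => key I),
    sum_ind_subset S {i, p} (by simp [Finset.insert_subset_iff, hi, hp])]
  by_cases h : i = p
  · subst h; simp
  · rw [card_insert_of_notMem (by simp [h]), card_singleton]
    simp [h]

lemma ind_three (S : Finset V) (i p q : V) (hi : i ∈ S) (hp : p ∈ S) (hq : q ∈ S) :
    ∑ I ∈ S.powerset, ind i I * ind p I * ind q I
      = (2:ℝ) ^ ((S.card : ℤ) - ({i, p, q} : Finset V).card) := by
  have key : ∀ I : Finset V,
      ind i I * ind p I * ind q I = if ({i, p, q} : Finset V) ⊆ I then (1:ℝ) else 0 := by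
    intro I
    unfold ind
    by_cases h1 : i ∈ I <;> by_cases h2 : p ∈ I <;> by_cases h3 : q ∈ I <;>
      simp [h1, h2, h3, Finset.insert_subset_iff]
  rw [Finset.sum_congr rfl (fun I _ => key I),
    sum_ind_subset S {i, p, q} (by simp [Finset.insert_subset_iff, hi, hp, hq])]

lemma term1 (S : Finset V) (a b : V → ℝ) :
    ∑ I ∈ S.powerset, (∑ i ∈ I, a i) * (∑ p ∈ I, b p)
      = (2:ℝ) ^ ((S.card : ℤ) - 2) *
        ((∑ i ∈ S, a i) * (∑ p ∈ S, b p) + ∑ i ∈ S, a i * b i) := by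
  have step1 : ∀ I ∈ S.powerset, (∑ i ∈ I, a i) * (∑ p ∈ I, b p)
      = ∑ i ∈ S, ∑ p ∈ S, (ind i I * ind p I) * (a i * b p) := by
    intro I hI
    rw [sum_eq_ind_sum S I (mem_powerset.1 hI) a, sum_eq_ind_sum S I (mem_powerset.1 hI) b,
      Finset.sum_mul_sum]
    exact Finset.sum_congr rfl fun i _ => Finset.sum_congr rfl fun p _ => by ring
  rw [Finset.sum_congr rfl step1, Finset.sum_comm]
  have step2 : ∀ i ∈ S, ∑ I ∈ S.powerset, ∑ p ∈ S, (ind i I * ind p I) * (a i * b p)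
      = ∑ p ∈ S, (∑ I ∈ S.powerset, ind i I * ind p I) * (a i * b p) := by
    intro i _
    rw [Finset.sum_comm]
    exact Finset.sum_congr rfl fun p _ => by rw [Finset.sum_mul]
  rw [Finset.sum_congr rfl step2]
  have step3 : ∀ i ∈ S, ∑ p ∈ S, (∑ I ∈ S.powerset, ind i I * ind p I) * (a i * b p)
      = ∑ p ∈ S, ((2:ℝ) ^ ((S.card : ℤ) - 2) * (a i * b p)
          + (if i = p then (2:ℝ) ^ ((S.card : ℤ) - 2) * (a i * b p) else 0)) := by
    intro i hi
    refine Finset.sum_congr rfl fun p hp => ?_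
    rw [ind_two S i p hi hp]
    by_cases h : i = p
    · subst h
      have h1 : (2:ℝ) ^ ((S.card : ℤ) - 1) = (2:ℝ) ^ ((S.card : ℤ) - 2) * 2 := by
        rw [← zpow_add_one₀ (by norm_num : (2:ℝ) ≠ 0)]
        congr 1; ring
      rw [if_pos rfl, if_pos rfl, h1]; ring
    · simp only [if_neg h]; ring
  rw [Finset.sum_congr rfl step3]
  simp only [Finset.sum_add_distrib]
  have d1 : ∑ i ∈ S, ∑ p ∈ S, (2:ℝ) ^ ((S.card : ℤ) - 2) * (a i * b p)
      = (2:ℝ) ^ ((S.card : ℤ) - 2) * ((∑ i ∈ S, a i) * (∑ p ∈ S, b p)) := by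
    rw [Finset.sum_mul_sum, Finset.mul_sum]
    exact Finset.sum_congr rfl fun i _ => by rw [Finset.mul_sum]
  have d2 : ∑ i ∈ S, ∑ p ∈ S, (if i = p then (2:ℝ) ^ ((S.card : ℤ) - 2) * (a i * b p) else 0)
      = (2:ℝ) ^ ((S.card : ℤ) - 2) * (∑ i ∈ S, a i * b i) := by
    rw [Finset.mul_sum]
    refine Finset.sum_congr rfl fun i hi => ?_
    rw [Finset.sum_ite_eq S i (fun p => (2:ℝ) ^ ((S.card : ℤ) - 2) * (a i * b p)), if_pos hi]
  rw [d1, d2, mul_add]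

lemma term2 (S : Finset V) (a : V → ℝ) (c : V → V → ℝ)
    (hsym : ∀ p q, c p q = c q p) (hdiag : ∀ p, c p p = 0) :
    ∑ I ∈ S.powerset, (∑ i ∈ I, a i) * (∑ p ∈ I, ∑ q ∈ I, c p q)
      = (2:ℝ) ^ ((S.card : ℤ) - 3) *
        ((∑ i ∈ S, a i) * (∑ p ∈ S, ∑ q ∈ S, c p q)
          + 2 * ∑ p ∈ S, a p * ∑ q ∈ S, c p q) := by
  have step1 : ∀ I ∈ S.powerset, (∑ i ∈ I, a i) * (∑ p ∈ I, ∑ q ∈ I, c p q)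
      = ∑ i ∈ S, ∑ p ∈ S, ∑ q ∈ S, (ind i I * ind p I * ind q I) * (a i * c p q) := by
    intro I hI
    have hIS := mem_powerset.1 hI
    rw [sum_eq_ind_sum S I hIS a,
      sum_eq_ind_sum S I hIS (fun p => ∑ q ∈ I, c p q)]
    have inner : ∀ p, ind p I * ∑ q ∈ I, c p q = ∑ q ∈ S, ind p I * (ind q I * c p q) := by
      intro p
      rw [sum_eq_ind_sum S I hIS (fun q => c p q), Finset.mul_sum]
    rw [Finset.sum_congr rfl fun p _ => inner p, Finset.sum_mul_sum]
    refine Finset.sum_congr rfl fun i _ => Finset.sum_congr rfl fun p _ => ?_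
    rw [Finset.mul_sum]
    exact Finset.sum_congr rfl fun q _ => by ring
  rw [Finset.sum_congr rfl step1, Finset.sum_comm]
  have step2 : ∀ i ∈ S, ∑ I ∈ S.powerset, ∑ p ∈ S, ∑ q ∈ S,
        (ind i I * ind p I * ind q I) * (a i * c p q)
      = ∑ p ∈ S, ∑ q ∈ S, (∑ I ∈ S.powerset, ind i I * ind p I * ind q I) * (a i * c p q) := by
    intro i _
    rw [Finset.sum_comm]
    refine Finset.sum_congr rfl fun p _ => ?_
    rw [Finset.sum_comm]
    exact Finset.sum_congr rfl fun q _ => by rw [Finset.sum_mul]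
  rw [Finset.sum_congr rfl step2]
  have key : ∀ i ∈ S, ∀ p ∈ S, ∀ q ∈ S,
      (∑ I ∈ S.powerset, ind i I * ind p I * ind q I) * (a i * c p q)
      = (2:ℝ) ^ ((S.card : ℤ) - 3) * (a i * c p q)
        + (if i = p then (2:ℝ) ^ ((S.card : ℤ) - 3) * (a i * c p q) else 0)
        + (if i = q then (2:ℝ) ^ ((S.card : ℤ) - 3) * (a i * c p q) else 0) := by
    intro i hi p hp q hq
    rw [ind_three S i p q hi hp hq]
    by_cases hpq : p = q
    · subst hpq; rw [hdiag p]; simp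
    by_cases hip : i = p
    · subst hip
      have hcard : ({i, i, q} : Finset V).card = 2 := by
        rw [Finset.insert_idem, card_insert_of_notMem (by simp [hpq]), card_singleton]
      rw [hcard, if_pos rfl, if_neg hpq]
      have h2 : ((S.card : ℤ) - ((2:ℕ):ℤ)) = ((S.card : ℤ) - 3) + 1 := by push_cast; ring
      rw [h2, zpow_add_one₀ (by norm_num : (2:ℝ) ≠ 0)]; ring
    by_cases hiq : i = q
    · subst hiq
      have hcard : ({i, p, i} : Finset V).card = 2 := by
        have he : ({i, p, i} : Finset V) = {i, p} := by
          ext x; simp only [mem_insert, mem_singleton]; tauto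
        rw [he, card_pair hip]
      rw [hcard, if_neg hip, if_pos rfl]
      have h2 : ((S.card : ℤ) - ((2:ℕ):ℤ)) = ((S.card : ℤ) - 3) + 1 := by push_cast; ring
      rw [h2, zpow_add_one₀ (by norm_num : (2:ℝ) ≠ 0)]; ring
    · have hcard : ({i, p, q} : Finset V).card = 3 := by
        rw [card_insert_of_notMem (by simp [hip, hiq]),
          card_insert_of_notMem (by simp [hpq]), card_singleton]
      rw [hcard, if_neg hip, if_neg hiq]
      have h3 : ((S.card : ℤ) - ((3:ℕ):ℤ)) = (S.card : ℤ) - 3 := by push_cast; ring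
      rw [h3]; ring
  rw [Finset.sum_congr rfl fun i hi => Finset.sum_congr rfl fun p hp =>
    Finset.sum_congr rfl fun q hq => key i hi p hp q hq]
  simp only [Finset.sum_add_distrib]
  have d1 : ∑ i ∈ S, ∑ p ∈ S, ∑ q ∈ S, (2:ℝ) ^ ((S.card : ℤ) - 3) * (a i * c p q)
      = (2:ℝ) ^ ((S.card : ℤ) - 3) * ((∑ i ∈ S, a i) * (∑ p ∈ S, ∑ q ∈ S, c p q)) := by
    simp only [← Finset.mul_sum]
    rw [← Finset.sum_mul]
  have d2 : ∑ i ∈ S, ∑ p ∈ S, ∑ q ∈ S,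
        (if i = p then (2:ℝ) ^ ((S.card : ℤ) - 3) * (a i * c p q) else 0)
      = (2:ℝ) ^ ((S.card : ℤ) - 3) * ∑ p ∈ S, a p * ∑ q ∈ S, c p q := by
    have inner : ∀ i ∈ S, ∑ p ∈ S, ∑ q ∈ S,
          (if i = p then (2:ℝ) ^ ((S.card : ℤ) - 3) * (a i * c p q) else 0)
        = ∑ p ∈ S, (if i = p then ∑ q ∈ S, (2:ℝ) ^ ((S.card : ℤ) - 3) * (a i * c p q) else 0) := by
      intro i _
      refine Finset.sum_congr rfl fun p _ => ?_
      split
      · rfl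
      · exact Finset.sum_const_zero
    rw [Finset.sum_congr rfl inner, Finset.mul_sum]
    refine Finset.sum_congr rfl fun i hi => ?_
    rw [Finset.sum_ite_eq S i, if_pos hi]
    simp only [← Finset.mul_sum]
  have d3 : ∑ i ∈ S, ∑ p ∈ S, ∑ q ∈ S,
        (if i = q then (2:ℝ) ^ ((S.card : ℤ) - 3) * (a i * c p q) else 0)
      = (2:ℝ) ^ ((S.card : ℤ) - 3) * ∑ p ∈ S, a p * ∑ q ∈ S, c p q := by
    have inner : ∀ i ∈ S, ∀ p ∈ S, ∑ q ∈ S,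
          (if i = q then (2:ℝ) ^ ((S.card : ℤ) - 3) * (a i * c p q) else 0)
        = if i ∈ S then (2:ℝ) ^ ((S.card : ℤ) - 3) * (a i * c p i) else 0 := by
      intro i _ p _
      exact Finset.sum_ite_eq S i (fun q => (2:ℝ) ^ ((S.card : ℤ) - 3) * (a i * c p q))
    rw [Finset.sum_congr rfl fun i hi => Finset.sum_congr rfl fun p hp => inner i hi p hp]
    have h4 : ∀ i ∈ S, ∑ p ∈ S,
          (if i ∈ S then (2:ℝ) ^ ((S.card : ℤ) - 3) * (a i * c p i) else 0)
        = (2:ℝ) ^ ((S.card : ℤ) - 3) * (a i * ∑ q ∈ S, c i q) := by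
      intro i hi
      have hpt : ∀ p ∈ S, (if i ∈ S then (2:ℝ) ^ ((S.card : ℤ) - 3) * (a i * c p i) else 0)
          = (2:ℝ) ^ ((S.card : ℤ) - 3) * (a i * c i p) := fun p _ => by
        rw [if_pos hi, hsym p i]
      rw [Finset.sum_congr rfl hpt]
      simp only [← Finset.mul_sum]
    rw [Finset.sum_congr rfl h4, Finset.mul_sum]
  rw [d1, d2, d3]
  ring

/-- Entries of `Qᵀr`:
`∑_{I ⊊ O} 1{j∉I} vol(I,{j}) vol(I,V∖I) = 2^{|O|−4} [vol(O∖{j},O∖{j}) deg_O(j)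
  + 2 vol(V∖(O∖{j}), O∖{j}) deg_O(j) + 2 vol(adj_O(j), V∖(O∖{j}))]`. -/
theorem Qtr_entry (G : SimpleGraph V) [DecidableRel G.Adj] (O : Finset V)
    (j : V) (hj : j ∈ O) :
    ∑ I ∈ O.powerset.filter (fun I => I ⊂ O),
        (if j ∉ I then (1 : ℝ) else 0) * vol G I {j} * vol G I Iᶜ =
      (2 : ℝ) ^ ((O.card : ℤ) - 4) *
        (vol G (O.erase j) (O.erase j) * degS G O j
          + 2 * vol G (O.erase j)ᶜ (O.erase j) * degS G O j
          + 2 * vol G (O.filter fun i => G.Adj i j) (O.erase j)ᶜ) := by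
  set S : Finset V := O.erase j with hS
  set c : V → V → ℝ := adjMat G with hc
  set a : V → ℝ := fun i => adjMat G i j with ha
  have hsym : ∀ p q, c p q = c q p := by
    intro p q; simp only [hc, adjMat]; exact if_congr (G.adj_comm p q) rfl rfl
  have hdiag : ∀ p, c p p = 0 := by
    intro p; simp [hc, adjMat]
  set dV : V → ℝ := fun p => ∑ q, c p q with hdV
  -- Step A: reduce the sum to S.powerset
  have hsetsA : (O.powerset.filter (fun I => I ⊂ O)).filter (fun I => j ∉ I)
      = S.powerset := by
    ext I
    constructor
    · intro h
      rw [mem_filter, mem_filter, mem_powerset] at h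
      rw [mem_powerset, hS, subset_erase]
      exact ⟨h.1.1, h.2⟩
    · intro h
      rw [mem_powerset, hS, subset_erase] at h
      rw [mem_filter, mem_filter, mem_powerset]
      exact ⟨⟨h.1, (Finset.ssubset_iff_of_subset h.1).2 ⟨j, hj, h.2⟩⟩, h.2⟩
  have stepA : ∑ I ∈ O.powerset.filter (fun I => I ⊂ O),
        (if j ∉ I then (1 : ℝ) else 0) * vol G I {j} * vol G I Iᶜ
      = ∑ I ∈ S.powerset, vol G I {j} * vol G I Iᶜ := by
    calc ∑ I ∈ O.powerset.filter (fun I => I ⊂ O),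
            (if j ∉ I then (1 : ℝ) else 0) * vol G I {j} * vol G I Iᶜ
        = ∑ I ∈ O.powerset.filter (fun I => I ⊂ O),
            (if j ∉ I then vol G I {j} * vol G I Iᶜ else 0) := by
          refine Finset.sum_congr rfl fun I _ => ?_
          split <;> ring
      _ = ∑ I ∈ (O.powerset.filter (fun I => I ⊂ O)).filter (fun I => j ∉ I),
            vol G I {j} * vol G I Iᶜ := (Finset.sum_filter _ _).symm
      _ = ∑ I ∈ S.powerset, vol G I {j} * vol G I Iᶜ := by rw [hsetsA]
  rw [stepA]
  -- replace volumes with sums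
  have hvol1 : ∀ I : Finset V, vol G I {j} = ∑ i ∈ I, a i := by
    intro I
    unfold vol
    exact Finset.sum_congr rfl fun i _ => Finset.sum_singleton _ _
  have hvol2 : ∀ I : Finset V, vol G I Iᶜ = (∑ p ∈ I, dV p) - ∑ p ∈ I, ∑ q ∈ I, c p q := by
    intro I
    unfold vol
    rw [← Finset.sum_sub_distrib]
    refine Finset.sum_congr rfl fun p _ => ?_
    have := Finset.sum_add_sum_compl I (fun q => c p q)
    simp only [hdV]
    linarith
  have stepB : ∑ I ∈ S.powerset, vol G I {j} * vol G I Iᶜ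
      = (∑ I ∈ S.powerset, (∑ i ∈ I, a i) * (∑ p ∈ I, dV p))
        - ∑ I ∈ S.powerset, (∑ i ∈ I, a i) * (∑ p ∈ I, ∑ q ∈ I, c p q) := by
    rw [← Finset.sum_sub_distrib]
    refine Finset.sum_congr rfl fun I _ => ?_
    rw [hvol1 I, hvol2 I]; ring
  rw [stepB, term1 S a dV, term2 S a c hsym hdiag]
  -- abbreviations
  set A : ℝ := ∑ i ∈ S, a i with hA
  set D : ℝ := ∑ p ∈ S, dV p with hD
  set E : ℝ := ∑ i ∈ S, a i * dV i with hE
  set C : ℝ := ∑ p ∈ S, ∑ q ∈ S, c p q with hC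
  set F : ℝ := ∑ p ∈ S, a p * ∑ q ∈ S, c p q with hF
  -- RHS pieces
  have hcard : (O.card : ℤ) - 4 = (S.card : ℤ) - 3 := by
    have := Finset.card_erase_add_one hj
    rw [hS]
    push_cast [← this]
    ring
  have h1 : vol G S S = C := rfl
  have h2 : degS G O j = A := by
    unfold degS
    rw [← Finset.sum_erase O (h := hdiag j), ← hS]
    exact Finset.sum_congr rfl fun s _ => hsym j s
  have h3 : vol G Sᶜ S = D - C := by
    have hsplit : vol G S S + vol G Sᶜ S = ∑ p, ∑ q ∈ S, c p q := by
      unfold vol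
      exact Finset.sum_add_sum_compl S (fun p => ∑ q ∈ S, c p q)
    have huniv : ∑ p, ∑ q ∈ S, c p q = D := by
      rw [Finset.sum_comm, hD]
      exact Finset.sum_congr rfl fun q _ => Finset.sum_congr rfl fun p _ => hsym p q
    rw [h1] at hsplit
    linarith
  have h4 : vol G (O.filter fun i => G.Adj i j) Sᶜ = E - F := by
    unfold vol
    rw [Finset.sum_filter]
    have hpt : ∀ i, (if G.Adj i j then ∑ q ∈ Sᶜ, c i q else 0)
        = a i * (dV i - ∑ q ∈ S, c i q) := by
      intro i
      have hcompl : ∑ q ∈ Sᶜ, c i q = dV i - ∑ q ∈ S, c i q := by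
        have := Finset.sum_add_sum_compl S (fun q => c i q)
        simp only [hdV]; linarith
      rw [hcompl, ha]
      simp only [adjMat]
      split <;> ring
    have haj : a j * (dV j - ∑ q ∈ S, c j q) = 0 := by
      have : a j = 0 := hdiag j
      rw [this]; ring
    rw [Finset.sum_congr rfl fun i _ => hpt i,
      ← Finset.sum_erase O (f := fun i => a i * (dV i - ∑ q ∈ S, c i q)) (a := j) haj,
      ← hS, hE, hF, ← Finset.sum_sub_distrib]
    exact Finset.sum_congr rfl fun i _ => by ring
  rw [hcard, h1, h2, h3, h4]
  have hpow : (2:ℝ) ^ ((S.card : ℤ) - 2) = (2:ℝ) ^ ((S.card : ℤ) - 3) * 2 := by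
    rw [← zpow_add_one₀ (by norm_num : (2:ℝ) ≠ 0)]
    congr 1; ring
  rw [hpow]
  ring
end
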